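/- Deterministic consensus under square-summable stepsizes: Let x^{k+1} = (W ⊗ I_d)(x^k − λ^k u^k) with W symmetric doubly stochastic and η := ‖W − (1/m)𝟏𝟏ᵀ‖ ∈ (0,1), and averages x̄^k := (1/m)Σ_i x_i^k. If Σ_{k=0}^∞ (λ^k)² < ∞ and sup_k ‖u^k‖ < ∞, then (1 − η) Σ_{k=0}^∞ ‖x^k − x̄^k ⊗ 𝟏‖² ≤ ‖x^0 − x̄^0 ⊗ 𝟏‖² + (η²/(1 − η)) Σ_{k=0}^∞ (λ^k)² ‖u^k‖² < ∞; in particular ‖x_i^k − x̄^k‖ → 0 as k → ∞ for every i. -/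

import Mathlib

open Filter
open scoped Matrix

/-- The Euclidean norm of the stacked vector `(y 1, …, y m) ∈ ℝ^{md}`. -/
noncomputable def stackedNorm {m d : ℕ} (y : Fin m → EuclideanSpace ℝ (Fin d)) : ℝ :=
  Real.sqrt (∑ i, ‖y i‖ ^ 2)



lemma eucl_norm_sq {n : ℕ} (w : EuclideanSpace ℝ (Fin n)) : ‖w‖ ^ 2 = ∑ l, (w l) ^ 2 := by
  rw [EuclideanSpace.norm_eq, Real.sq_sqrt (by positivity)]
  simp [sq_abs]

lemma stackedNorm_eq_norm {m d : ℕ} (y : Fin m → EuclideanSpace ℝ (Fin d)) :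
    stackedNorm y = ‖(WithLp.equiv 2 (∀ _ : Fin m, EuclideanSpace ℝ (Fin d))).symm y‖ := by
  rw [PiLp.norm_eq_of_L2]; rfl

lemma stackedNorm_nonneg {m d : ℕ} (y : Fin m → EuclideanSpace ℝ (Fin d)) :
    0 ≤ stackedNorm y := Real.sqrt_nonneg _

lemma stackedNorm_sub_le {m d : ℕ} (p q : Fin m → EuclideanSpace ℝ (Fin d)) :
    stackedNorm (fun j => p j - q j) ≤ stackedNorm p + stackedNorm q := by
  rw [stackedNorm_eq_norm, stackedNorm_eq_norm, stackedNorm_eq_norm]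
  exact norm_sub_le _ _

lemma stackedNorm_smul {m d : ℕ} (c : ℝ) (p : Fin m → EuclideanSpace ℝ (Fin d)) :
    stackedNorm (fun j => c • p j) = |c| * stackedNorm p := by
  rw [stackedNorm_eq_norm, stackedNorm_eq_norm]
  have : (WithLp.equiv 2 (∀ _ : Fin m, EuclideanSpace ℝ (Fin d))).symm (fun j => c • p j)
      = c • (WithLp.equiv 2 (∀ _ : Fin m, EuclideanSpace ℝ (Fin d))).symm p := rfl
  rw [this, norm_smul, Real.norm_eq_abs]

lemma norm_le_stackedNorm {m d : ℕ} (y : Fin m → EuclideanSpace ℝ (Fin d)) (i : Fin m) :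
    ‖y i‖ ≤ stackedNorm y := by
  have h : ‖y i‖ ^ 2 ≤ ∑ j, ‖y j‖ ^ 2 :=
    Finset.single_le_sum (f := fun j => ‖y j‖ ^ 2) (fun j _ => by positivity) (Finset.mem_univ i)
  calc ‖y i‖ = Real.sqrt (‖y i‖ ^ 2) := (Real.sqrt_sq (norm_nonneg _)).symm
    _ ≤ _ := Real.sqrt_le_sqrt h

lemma stackedNorm_matvec_le {m d : ℕ} (B : Matrix (Fin m) (Fin m) ℝ)
    (v : Fin m → EuclideanSpace ℝ (Fin d)) :
    stackedNorm (fun i => ∑ j, B i j • v j)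
      ≤ ‖Matrix.toEuclideanCLM (𝕜 := ℝ) (n := Fin m) B‖ * stackedNorm v := by
  set η := ‖Matrix.toEuclideanCLM (𝕜 := ℝ) (n := Fin m) B‖ with hη
  have hη0 : 0 ≤ η := norm_nonneg _
  have happly : ∀ (i : Fin m) (l : Fin d), (∑ j, B i j • v j) l = ∑ j, B i j * v j l := by
    intro i l
    simp only [show ∀ (w : EuclideanSpace ℝ (Fin d)), w l = EuclideanSpace.proj (𝕜 := ℝ) l w
      from fun _ => rfl, map_sum, map_smul, smul_eq_mul]
  have main : ∑ i, ‖∑ j, B i j • v j‖ ^ 2 ≤ η ^ 2 * ∑ j, ‖v j‖ ^ 2 := by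
    calc ∑ i, ‖∑ j, B i j • v j‖ ^ 2 = ∑ l : Fin d, ∑ i, (∑ j, B i j * v j l) ^ 2 := by
          simp_rw [eucl_norm_sq, happly]; rw [Finset.sum_comm]
      _ ≤ ∑ l : Fin d, η ^ 2 * ∑ j, (v j l) ^ 2 := by
          apply Finset.sum_le_sum
          intro l _
          set w : EuclideanSpace ℝ (Fin m) := (WithLp.equiv 2 (Fin m → ℝ)).symm (fun j => v j l)
            with hw
          have hb := (Matrix.toEuclideanCLM (𝕜 := ℝ) (n := Fin m) B).le_opNorm w
          have h1 : ‖Matrix.toEuclideanCLM (𝕜 := ℝ) (n := Fin m) B w‖ ^ 2 ≤ η ^ 2 * ‖w‖ ^ 2 := by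
            rw [← mul_pow]
            exact pow_le_pow_left₀ (norm_nonneg _) hb 2
          have h2 : ∀ i, (Matrix.toEuclideanCLM (𝕜 := ℝ) (n := Fin m) B w) i
              = ∑ j, B i j * v j l := by
            intro i
            rw [hw, WithLp.equiv_symm_apply, Matrix.toEuclideanCLM_toLp]
            simp [Matrix.toLin'_apply, Matrix.mulVec, dotProduct]
          have h3 : ‖w‖ ^ 2 = ∑ j, (v j l) ^ 2 := by
            rw [eucl_norm_sq]; rfl
          rw [eucl_norm_sq] at h1
          simp_rw [h2] at h1
          rw [h3] at h1
          exact h1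
      _ = η ^ 2 * ∑ j, ‖v j‖ ^ 2 := by
          rw [← Finset.mul_sum, Finset.sum_comm]
          simp_rw [eucl_norm_sq]
  calc stackedNorm (fun i => ∑ j, B i j • v j) = Real.sqrt (∑ i, ‖∑ j, B i j • v j‖ ^ 2) := rfl
    _ ≤ Real.sqrt (η ^ 2 * ∑ j, ‖v j‖ ^ 2) := Real.sqrt_le_sqrt main
    _ = η * stackedNorm v := by
        rw [Real.sqrt_mul (sq_nonneg η), Real.sqrt_sq hη0]; rfl

set_option maxHeartbeats 1000000 in
/-- **Deterministic consensus under square-summable stepsizes**: for the dynamics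
`x^{k+1} = (W ⊗ I_d)(x^k - λ^k u^k)` with `W` symmetric doubly stochastic,
`η = ‖W - (1/m)𝟙𝟙ᵀ‖ ∈ (0,1)`, square-summable stepsizes and bounded disturbances,
`(1-η)∑_k ‖x^k - x̄^k ⊗ 𝟙‖² ≤ ‖x^0 - x̄^0 ⊗ 𝟙‖² + (η²/(1-η))∑_k (λ^k)²‖u^k‖² < ∞`;
in particular `‖x_i^k - x̄^k‖ → 0` for every `i`. -/
theorem deterministic_consensus
    {m d : ℕ} (hm : 0 < m)
    (W : Matrix (Fin m) (Fin m) ℝ)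
    (hWsymm : W.IsSymm)
    (hWnonneg : ∀ i j, 0 ≤ W i j)
    (hWrow : W *ᵥ (fun _ => (1 : ℝ)) = fun _ => 1)
    (hWcol : (fun _ => (1 : ℝ)) ᵥ* W = fun _ => 1)
    (η : ℝ)
    (hη : η = ‖Matrix.toEuclideanCLM (𝕜 := ℝ) (n := Fin m)
        (W - (m : ℝ)⁻¹ • Matrix.of (fun _ _ => (1 : ℝ)))‖)
    (hη0 : 0 < η) (hη1 : η < 1)
    (lam : ℕ → ℝ) (hlam : ∀ k, 0 ≤ lam k)
    (hsq : Summable (fun k => lam k ^ 2))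
    (u : ℕ → Fin m → EuclideanSpace ℝ (Fin d))
    (C : ℝ) (hu : ∀ k, stackedNorm (u k) ≤ C)
    (x : ℕ → Fin m → EuclideanSpace ℝ (Fin d))
    (hx : ∀ k i, x (k + 1) i = ∑ j, W i j • (x k j - lam k • u k j)) :
    Summable (fun k => lam k ^ 2 * stackedNorm (u k) ^ 2)
    ∧ Summable (fun k => stackedNorm (fun i => x k i - (m : ℝ)⁻¹ • ∑ i', x k i') ^ 2)
    ∧ (1 - η) * ∑' k, stackedNorm (fun i => x k i - (m : ℝ)⁻¹ • ∑ i', x k i') ^ 2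
        ≤ stackedNorm (fun i => x 0 i - (m : ℝ)⁻¹ • ∑ i', x 0 i') ^ 2
          + (η ^ 2 / (1 - η)) * ∑' k, lam k ^ 2 * stackedNorm (u k) ^ 2
    ∧ ∀ i, Tendsto (fun k => ‖x k i - (m : ℝ)⁻¹ • ∑ i', x k i'‖) atTop (nhds 0) := by
  classical
  have h1η : (0:ℝ) < 1 - η := by linarith
  set B : Matrix (Fin m) (Fin m) ℝ := W - (m : ℝ)⁻¹ • Matrix.of (fun _ _ => (1 : ℝ)) with hB
  have hBij : ∀ i j, B i j = W i j - (m : ℝ)⁻¹ := by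
    intro i j
    simp [hB, Matrix.sub_apply, Matrix.smul_apply, Matrix.of_apply, smul_eq_mul]
  have rowsum : ∀ i, ∑ j, W i j = 1 := by
    intro i
    have := congrFun hWrow i
    simpa [Matrix.mulVec, dotProduct] using this
  have colsum : ∀ j, ∑ i, W i j = 1 := by
    intro j
    have := congrFun hWcol j
    simpa [Matrix.vecMul, dotProduct] using this
  have hm' : (m : ℝ) ≠ 0 := Nat.cast_ne_zero.2 hm.ne'
  have key : ∀ k, (fun i => x (k+1) i - (m:ℝ)⁻¹ • ∑ i', x (k+1) i')
      = fun i => ∑ j, B i j • ((x k j - (m:ℝ)⁻¹ • ∑ i', x k i') - lam k • u k j) := by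
    intro k
    funext i
    have h2 : ∑ i', x (k+1) i' = ∑ j, (x k j - lam k • u k j) := by
      simp_rw [hx k]
      rw [Finset.sum_comm]
      simp_rw [← Finset.sum_smul, colsum, one_smul]
    have hzero : ∑ j, (W i j - (m:ℝ)⁻¹) = 0 := by
      rw [Finset.sum_sub_distrib, rowsum]
      simp [hm']
    have hterm : ∀ j, B i j • ((x k j - (m:ℝ)⁻¹ • ∑ i', x k i') - lam k • u k j)
        = B i j • (x k j - lam k • u k j) - B i j • ((m:ℝ)⁻¹ • ∑ i', x k i') := by
      intro j
      rw [smul_sub, smul_sub, smul_sub]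
      abel
    calc x (k+1) i - (m:ℝ)⁻¹ • ∑ i', x (k+1) i'
        = ∑ j, (W i j - (m:ℝ)⁻¹) • (x k j - lam k • u k j) := by
          rw [hx k i, h2, Finset.smul_sum, ← Finset.sum_sub_distrib]
          exact Finset.sum_congr rfl (fun j _ => (sub_smul _ _ _).symm)
      _ = ∑ j, B i j • ((x k j - (m:ℝ)⁻¹ • ∑ i', x k i') - lam k • u k j) := by
          simp_rw [hterm, hBij]
          rw [Finset.sum_sub_distrib, ← Finset.sum_smul, hzero, zero_smul, sub_zero]
  have hstep : ∀ k, stackedNorm (fun i => x (k+1) i - (m:ℝ)⁻¹ • ∑ i', x (k+1) i')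
      ≤ η * (stackedNorm (fun i => x k i - (m:ℝ)⁻¹ • ∑ i', x k i')
          + lam k * stackedNorm (u k)) := by
    intro k
    rw [key k]
    have h1 := stackedNorm_matvec_le B
      (fun j => (x k j - (m:ℝ)⁻¹ • ∑ i', x k i') - lam k • u k j)
    rw [← hη] at h1
    refine h1.trans ?_
    have h2 := stackedNorm_sub_le (fun i => x k i - (m:ℝ)⁻¹ • ∑ i', x k i')
      (fun j => lam k • u k j)
    have h3 : stackedNorm (fun j => lam k • u k j) = lam k * stackedNorm (u k) := by
      rw [stackedNorm_smul, abs_of_nonneg (hlam k)]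
    refine mul_le_mul_of_nonneg_left ?_ hη0.le
    rw [← h3]
    exact h2
  set b : ℕ → ℝ := fun k => lam k ^ 2 * stackedNorm (u k) ^ 2 with hbdef
  set aa : ℕ → ℝ := fun k => stackedNorm (fun i => x k i - (m : ℝ)⁻¹ • ∑ i', x k i') ^ 2
    with haadef
  have ha0 : ∀ k, 0 ≤ aa k := fun k => sq_nonneg _
  have hb0 : ∀ k, 0 ≤ b k := fun k => by
    simp only [hbdef]; positivity
  have hbsum : Summable b := by
    refine Summable.of_nonneg_of_le hb0 (fun k => ?_) (hsq.mul_left (C^2))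
    simp only [hbdef]
    have hC0 : 0 ≤ C := (stackedNorm_nonneg (u 0)).trans (hu 0)
    have : stackedNorm (u k) ^ 2 ≤ C ^ 2 :=
      pow_le_pow_left₀ (stackedNorm_nonneg _) (hu k) 2
    calc lam k ^ 2 * stackedNorm (u k) ^ 2 ≤ lam k ^ 2 * C ^ 2 := by
          exact mul_le_mul_of_nonneg_left this (by positivity)
      _ = C ^ 2 * lam k ^ 2 := by ring
  set T : ℝ := ∑' k, b k with hT
  have hT0 : 0 ≤ T := tsum_nonneg hb0
  set D : ℝ := η ^ 2 / (1 - η) with hDdef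
  have hD0 : 0 ≤ D := div_nonneg (sq_nonneg _) h1η.le
  have hDη : D * (1 - η) = η ^ 2 := div_mul_cancel₀ _ h1η.ne'
  have hrec : ∀ k, aa (k+1) ≤ η * aa k + D * b k := by
    intro k
    have h := hstep k
    set N1 := stackedNorm (fun i => x (k+1) i - (m:ℝ)⁻¹ • ∑ i', x (k+1) i') with hN1def
    set A := stackedNorm (fun i => x k i - (m:ℝ)⁻¹ • ∑ i', x k i') with hAdef
    set L := lam k * stackedNorm (u k) with hLdef
    have hN1 : 0 ≤ N1 := stackedNorm_nonneg _
    have hA : 0 ≤ A := stackedNorm_nonneg _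
    have hL : 0 ≤ L := mul_nonneg (hlam k) (stackedNorm_nonneg _)
    have h1 : N1 ^ 2 ≤ η ^ 2 * (A + L) ^ 2 := by
      have := pow_le_pow_left₀ hN1 h 2
      calc N1 ^ 2 ≤ (η * (A + L)) ^ 2 := this
        _ = η ^ 2 * (A + L) ^ 2 := by ring
    have h2 : (1 - η) * (η ^ 2 * (A + L) ^ 2) ≤ (1 - η) * (η * A ^ 2) + η ^ 2 * L ^ 2 := by
      nlinarith [mul_nonneg hη0.le (sq_nonneg ((1 - η) * A - η * L))]
    have haa1 : aa (k+1) = N1 ^ 2 := rfl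
    have haak : aa k = A ^ 2 := rfl
    have hbk : b k = L ^ 2 := by
      simp only [hbdef, hLdef]; ring
    rw [haa1, haak, hbk]
    have h3 := mul_le_mul_of_nonneg_left h1 h1η.le
    nlinarith [h2, h3, hDη, h1η]
  have hpartial : ∀ n, ∑ k ∈ Finset.range n, aa k ≤ (aa 0 + D * T) / (1 - η) := by
    intro n
    rw [le_div_iff₀ h1η]
    cases n with
    | zero => simp; positivity
    | succ n =>
      have e1 : ∑ k ∈ Finset.range (n+1), aa k
          = (∑ k ∈ Finset.range n, aa (k+1)) + aa 0 := Finset.sum_range_succ' aa n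
      have e2 : ∑ k ∈ Finset.range n, aa (k+1)
          ≤ η * ∑ k ∈ Finset.range n, aa k + D * ∑ k ∈ Finset.range n, b k := by
        rw [Finset.mul_sum, Finset.mul_sum, ← Finset.sum_add_distrib]
        exact Finset.sum_le_sum (fun k _ => hrec k)
      have e3 : ∑ k ∈ Finset.range n, aa k ≤ ∑ k ∈ Finset.range (n+1), aa k := by
        rw [Finset.sum_range_succ]
        linarith [ha0 n]
      have e4 : ∑ k ∈ Finset.range n, b k ≤ T := hbsum.sum_le_tsum _ (fun k _ => hb0 k)
      have e5 := mul_le_mul_of_nonneg_left e3 hη0.le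
      have e6 := mul_le_mul_of_nonneg_left e4 hD0
      nlinarith [e1, e2, e5, e6]
  have hasum : Summable aa := summable_of_sum_range_le ha0 hpartial
  have htsum : ∑' k, aa k ≤ (aa 0 + D * T) / (1 - η) :=
    hasum.tsum_le_of_sum_range_le hpartial
  refine ⟨hbsum, hasum, ?_, ?_⟩
  · show (1 - η) * ∑' k, aa k ≤ aa 0 + D * T
    have h := mul_le_mul_of_nonneg_left htsum h1η.le
    have hc : (1 - η) * ((aa 0 + D * T) / (1 - η)) = aa 0 + D * T := by
      field_simp
    linarith [h, hc.le]
  · intro i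
    have h0 : Tendsto aa atTop (nhds 0) := hasum.tendsto_atTop_zero
    have hsqrt : Tendsto (fun k => Real.sqrt (aa k)) atTop (nhds 0) := by
      have := (Real.continuous_sqrt.tendsto 0).comp h0
      simpa [Function.comp_def] using this
    refine squeeze_zero (fun k => norm_nonneg _) (fun k => ?_) hsqrt
    have h1 := norm_le_stackedNorm (fun i' => x k i' - (m:ℝ)⁻¹ • ∑ i'', x k i'') i
    have h2 : Real.sqrt (aa k) = stackedNorm (fun i' => x k i' - (m:ℝ)⁻¹ • ∑ i'', x k i'') :=
      Real.sqrt_sq (stackedNorm_nonneg _)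
    rw [h2]
    exact h1
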